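/- Let Δx > 0 and let p be the unique quadratic polynomial satisfying (1/Δx)∫_{x_i-Δx/2}^{x_i+Δx/2} p = f_i, (1/Δx)∫_{x_{i+1}-Δx/2}^{x_{i+1}+Δx/2} p = f_{i+1}, and (1/Δx)∫_{x_i-Δx/2}^{x_i+Δx/2} p' = h_i, where x_{i+1} = x_i + Δx. Then p(x_i + Δx/2) = (5/6) f_i + (1/6) f_{i+1} + (1/3) Δx h_i. -/
import Mathlib


open intervalIntegral

theorem stmt_1 (Δx xi fi fip1 hi : ℝ) (hΔ : 0 < Δx)
    (p : Polynomial ℝ) (hdeg : p.natDegree ≤ 2)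
    (h1 : (1 / Δx) * ∫ x in (xi - Δx / 2)..(xi + Δx / 2), p.eval x = fi)
    (h2 : (1 / Δx) * ∫ x in ((xi + Δx) - Δx / 2)..((xi + Δx) + Δx / 2), p.eval x = fip1)
    (h3 : (1 / Δx) * ∫ x in (xi - Δx / 2)..(xi + Δx / 2), (Polynomial.derivative p).eval x = hi) :
    p.eval (xi + Δx / 2) = (5 / 6) * fi + (1 / 6) * fip1 + (1 / 3) * Δx * hi := by
  set a := p.coeff 2 with ha
  set b := p.coeff 1 with hb
  set c := p.coeff 0 with hc
  have hev : ∀ x : ℝ, p.eval x = c + b * x + a * x ^ 2 := by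
    intro x
    rw [Polynomial.eval_eq_sum_range' (lt_of_le_of_lt hdeg (by norm_num : (2:ℕ) < 3))]
    simp [Finset.sum_range_succ]
    try ring
  have hne : Δx ≠ 0 := ne_of_gt hΔ
  have hint : ∀ l u : ℝ, (∫ x in l..u, p.eval x)
      = c * (u - l) + b * (u ^ 2 - l ^ 2) / 2 + a * (u ^ 3 - l ^ 3) / 3 := by
    intro l u
    have i1 : IntervalIntegrable (fun x : ℝ => c) MeasureTheory.volume l u :=
      (continuous_const).intervalIntegrable _ _
    have i2 : IntervalIntegrable (fun x : ℝ => b * x) MeasureTheory.volume l u :=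
      (continuous_const.mul continuous_id).intervalIntegrable _ _
    have i3 : IntervalIntegrable (fun x : ℝ => a * x ^ 2) MeasureTheory.volume l u :=
      (continuous_const.mul (continuous_pow 2)).intervalIntegrable _ _
    calc (∫ x in l..u, p.eval x)
        = ∫ x in l..u, (c + b * x + a * x ^ 2) := by simp_rw [hev]
      _ = (∫ x in l..u, (c + b * x)) + ∫ x in l..u, a * x ^ 2 := by
          rw [intervalIntegral.integral_add (i1.add i2) i3]
      _ = ((∫ x in l..u, (c : ℝ)) + ∫ x in l..u, b * x) + ∫ x in l..u, a * x ^ 2 := by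
          rw [intervalIntegral.integral_add i1 i2]
      _ = c * (u - l) + b * (u ^ 2 - l ^ 2) / 2 + a * (u ^ 3 - l ^ 3) / 3 := by
          rw [intervalIntegral.integral_const, intervalIntegral.integral_const_mul,
            intervalIntegral.integral_const_mul, integral_id, integral_pow]
          push_cast
          simp [smul_eq_mul]
          ring
  have hderiv : (∫ x in (xi - Δx / 2)..(xi + Δx / 2), (Polynomial.derivative p).eval x)
      = p.eval (xi + Δx / 2) - p.eval (xi - Δx / 2) := by
    exact intervalIntegral.integral_eq_sub_of_hasDerivAt (f := fun x => p.eval x)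
      (fun x _ => p.hasDerivAt x)
      ((Polynomial.derivative p).continuous_aeval.intervalIntegrable _ _)
  have E1 : c * Δx + b * ((xi + Δx / 2) ^ 2 - (xi - Δx / 2) ^ 2) / 2
      + a * ((xi + Δx / 2) ^ 3 - (xi - Δx / 2) ^ 3) / 3 = Δx * fi := by
    rw [← h1, hint]; field_simp; ring
  have E2 : c * Δx + b * ((xi + Δx + Δx / 2) ^ 2 - (xi + Δx / 2) ^ 2) / 2
      + a * ((xi + Δx + Δx / 2) ^ 3 - (xi + Δx / 2) ^ 3) / 3 = Δx * fip1 := by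
    rw [← h2, hint]; field_simp; ring
  have E3 : p.eval (xi + Δx / 2) - p.eval (xi - Δx / 2) = Δx * hi := by
    rw [← h3, ← hderiv]; field_simp
  simp only [hev] at E3 ⊢
  apply mul_left_cancel₀ hne
  linear_combination (5/6) * E1 + (1/6) * E2 + (Δx/3) * E3
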